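/- C(Δⁿ) is the universal unital C*-algebra generated by n+1 pairwise commuting positive elements summing to the unit: for any unital C*-algebra B and positive pairwise commuting elements c_0,...,c_n ∈ B with c_0 + ... + c_n = 1, there is a unique unital *-homomorphism C(Δⁿ) → B sending the i-th coordinate function to c_i. -/

import Mathlib

open scoped CStarAlgebra
open WeakDual WeakDual.CharacterSpace

/-- The `i`-th coordinate function on the standard simplex, as a complex-valued
continuous function. -/
noncomputable def simplexCoord (n : ℕ) (i : Fin (n + 1)) :
    C(stdSimplex ℝ (Fin (n + 1)), ℂ) :=
  ⟨fun p => (p.1 i : ℂ),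
    Complex.continuous_ofReal.comp ((continuous_apply i).comp continuous_subtype_val)⟩

/-- `C(Δⁿ)` is the universal unital C*-algebra generated by `n+1` pairwise commuting
positive elements summing to the unit: given such elements `c₀, …, cₙ` in a unital
C*-algebra `B`, there is a unique unital *-homomorphism `C(Δⁿ) → B` sending the `i`-th
coordinate function to `cᵢ`. -/
theorem simplex_universal_property (n : ℕ)
    (B : Type) [NormedRing B] [StarRing B] [CStarRing B] [NormedAlgebra ℂ B]
    [StarModule ℂ B] [CompleteSpace B]
    (c : Fin (n + 1) → B)
    (hsa : ∀ i, IsSelfAdjoint (c i))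
    (hpos : ∀ i, spectrum ℂ (c i) ⊆ {z : ℂ | 0 ≤ z.re ∧ z.im = 0})
    (hcomm : ∀ i j, Commute (c i) (c j))
    (hsum : ∑ i, c i = 1) :
    ∃! φ : C(stdSimplex ℝ (Fin (n + 1)), ℂ) →⋆ₐ[ℂ] B,
      ∀ i, φ (simplexCoord n i) = c i := by
  letI : CStarAlgebra B := {}
  classical
  -- the commutative C*-subalgebra generated by the `c i`
  have hc : ∀ a ∈ Set.range c, ∀ b ∈ Set.range c, a * b = b * a := by
    rintro _ ⟨i, rfl⟩ _ ⟨j, rfl⟩; exact hcomm i j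
  letI : CommRing (StarAlgebra.adjoin ℂ (Set.range c)) :=
    StarAlgebra.adjoinCommRingOfComm ℂ hc (by
      rintro _ ⟨i, rfl⟩ _ ⟨j, rfl⟩; rw [(hsa j).star_eq]; exact hcomm i j)
  set S : StarSubalgebra ℂ B :=
    (StarAlgebra.adjoin ℂ (Set.range c)).topologicalClosure with hS
  letI : CommRing S := StarSubalgebra.commRingTopologicalClosure _ fun x y => mul_comm x y
  haveI hclosed : IsClosed (S : Set B) := isClosed_closure
  letI : CommCStarAlgebra S := { (inferInstance : CStarAlgebra S) with
    mul_comm := fun x y => mul_comm x y }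
  -- the `c i` as elements of `S`
  set c' : Fin (n + 1) → S := fun i =>
    ⟨c i, StarSubalgebra.le_topologicalClosure _
      (StarAlgebra.subset_adjoin ℂ _ ⟨i, rfl⟩)⟩ with hc'
  have hspec : ∀ (i) (χ : characterSpace ℂ S), 0 ≤ (χ (c' i)).re ∧ (χ (c' i)).im = 0 := by
    intro i χ
    have := apply_mem_spectrum χ (c' i)
    rw [StarSubalgebra.spectrum_eq] at this
    exact hpos i this
  have hsum' : ∀ χ : characterSpace ℂ S, ∑ i, (χ (c' i)).re = 1 := by
    intro χ
    have h1 : ∑ i, c' i = (1 : S) := Subtype.ext (by simpa using hsum)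
    have : ∑ i, χ (c' i) = 1 := by rw [← map_sum, h1, map_one]
    calc ∑ i, (χ (c' i)).re = (∑ i, χ (c' i)).re := by rw [Complex.re_sum]
      _ = 1 := by rw [this]; simp
  -- the continuous map from the character space to the simplex
  set f : C(characterSpace ℂ S, stdSimplex ℝ (Fin (n + 1))) :=
    ⟨fun χ => ⟨fun i => (χ (c' i)).re, fun i => (hspec i χ).1, hsum' χ⟩,
      Continuous.subtype_mk (continuous_pi fun i =>
        Complex.continuous_re.comp ((eval_continuous ((c' i : S))).comp
          continuous_subtype_val)) _⟩ with hf
  set φ : C(stdSimplex ℝ (Fin (n + 1)), ℂ) →⋆ₐ[ℂ] B :=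
    (S.subtype.comp ((gelfandStarTransform S).symm : C(characterSpace ℂ S, ℂ) →⋆ₐ[ℂ] S)).comp
      (ContinuousMap.compStarAlgHom' ℂ ℂ f) with hφ
  have hφc : ∀ i, φ (simplexCoord n i) = c i := by
    intro i
    have key : (ContinuousMap.compStarAlgHom' ℂ ℂ f) (simplexCoord n i)
        = gelfandStarTransform S (c' i) := by
      ext χ
      have him := (hspec i χ).2
      simp only [ContinuousMap.compStarAlgHom'_apply, ContinuousMap.comp_apply,
        gelfandStarTransform_apply_apply]
      apply Complex.ext <;> simp [simplexCoord, f, him]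
    simp only [hφ, StarAlgHom.comp_apply, key]
    exact (congrArg S.subtype ((gelfandStarTransform ↥S).symm_apply_apply (c' i))).trans rfl
  refine ⟨φ, hφc, ?_⟩
  -- uniqueness
  intro ψ hψ
  set T : StarSubalgebra ℂ C(stdSimplex ℝ (Fin (n + 1)), ℂ) :=
    StarAlgebra.adjoin ℂ (Set.range (simplexCoord n)) with hT
  have sep : T.SeparatesPoints := by
    intro p q hpq
    have : ∃ i, (p : Fin (n + 1) → ℝ) i ≠ (q : Fin (n + 1) → ℝ) i := by
      by_contra h
      push_neg at h
      exact hpq (Subtype.ext (funext h))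
    obtain ⟨i, hi⟩ := this
    refine ⟨_, ⟨simplexCoord n i, StarAlgebra.subset_adjoin ℂ _ ⟨i, rfl⟩, rfl⟩, ?_⟩
    exact fun h => hi (Complex.ofReal_injective h)
  have htop : T.topologicalClosure = ⊤ :=
    ContinuousMap.starSubalgebra_topologicalClosure_eq_top_of_separatesPoints _ sep
  have hdense : Dense (T : Set C(stdSimplex ℝ (Fin (n + 1)), ℂ)) := by
    rw [dense_iff_closure_eq, ← StarSubalgebra.topologicalClosure_coe, htop]
    rfl
  have heq : Set.EqOn ψ φ (T : Set C(stdSimplex ℝ (Fin (n + 1)), ℂ)) := by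
    intro x hx
    induction hx using StarAlgebra.adjoin_induction with
    | mem g hg =>
      obtain ⟨i, rfl⟩ := hg
      rw [hψ i, hφc i]
    | algebraMap r => rw [AlgHomClass.commutes, AlgHomClass.commutes]
    | add x y hx hy hx' hy' => rw [map_add, map_add, hx', hy']
    | mul x y hx hy hx' hy' => rw [map_mul, map_mul, hx', hy']
    | star x hx hx' => rw [map_star, map_star, hx']
  exact DFunLike.coe_injective <|
    Continuous.ext_on hdense (map_continuous ψ) (map_continuous φ) heq
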